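/- Let M be an m×m matrix over a commutative ring with entries M_{ij} = c_i + t·B_{ij}, where c is a column vector, t a scalar, and B an m×m matrix. Then det M = t^m · det B + t^{m-1} · Σ_{j=1}^m det B^j, where B^j is the matrix obtained from B by replacing its j-th column with the column vector c. -/

import Mathlib

open Matrix BigOperators

theorem det_col_plus_smul {R : Type*} [CommRing R] {m : ℕ}
    (B : Matrix (Fin m) (Fin m) R) (c : Fin m → R) (t : R)
    (M : Matrix (Fin m) (Fin m) R) (hM : ∀ i j, M i j = c i + t * B i j) :
    M.det = t ^ m * B.det + t ^ (m - 1) * ∑ j : Fin m, (B.updateCol j c).det := by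
  classical
  set a : Fin m → (Fin m → R) := fun _ => c with ha
  set b : Fin m → (Fin m → R) := fun j i => t * B i j with hb
  have key : M.det = ∑ S : Finset (Fin m), Matrix.det (S.piecewise a b) := by
    have h1 : Mᵀ = a + b := by
      ext j i
      simp [ha, hb, Matrix.transpose_apply, hM i j]
    rw [← Matrix.det_transpose, h1]
    exact (Matrix.detRowAlternating :
      (Fin m → R) [⋀^Fin m]→ₗ[R] R).toMultilinearMap.map_add_univ a b
  have hzero : ∀ S : Finset (Fin m), 2 ≤ S.card →
      Matrix.det (S.piecewise a b) = 0 := by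
    intro S hS
    obtain ⟨i, hi, j, hj, hij⟩ := Finset.one_lt_card.mp hS
    refine Matrix.det_zero_of_row_eq hij ?_
    simp [Finset.piecewise_eq_of_mem _ _ _ hi, Finset.piecewise_eq_of_mem _ _ _ hj, ha]
  have hempty : Matrix.det ((∅ : Finset (Fin m)).piecewise a b) = t ^ m * B.det := by
    have : (∅ : Finset (Fin m)).piecewise a b = t • Bᵀ := by
      ext j i; simp [hb, Matrix.smul_apply, smul_eq_mul]
    rw [this, Matrix.det_smul, Matrix.det_transpose]
    simp
  have hsingle : ∀ j : Fin m, Matrix.det (({j} : Finset (Fin m)).piecewise a b)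
      = t ^ (m - 1) * (B.updateCol j c).det := by
    intro j
    have : ({j} : Finset (Fin m)).piecewise a b = Matrix.updateRow (t • Bᵀ) j c := by
      ext k i
      by_cases hk : k = j
      · subst hk; simp [ha]
      · simp [Finset.piecewise_eq_of_notMem, hk, hb, Matrix.updateRow_ne hk,
          Matrix.smul_apply, smul_eq_mul]
    rw [this, Matrix.det_updateRow_smul_left, Matrix.updateRow_transpose,
      Matrix.det_transpose]
    simp
  -- restrict the sum
  set T : Finset (Finset (Fin m)) :=
    insert ∅ (Finset.univ.image fun j : Fin m => ({j} : Finset (Fin m))) with hT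
  have hsum : ∑ S : Finset (Fin m), Matrix.det (S.piecewise a b)
      = ∑ S ∈ T, Matrix.det (S.piecewise a b) := by
    refine (Finset.sum_subset (Finset.subset_univ T) ?_).symm
    intro S _ hS
    refine hzero S ?_
    rcases Nat.lt_or_ge S.card 2 with h | h
    · exfalso
      interval_cases h' : S.card
      · exact hS (by simp [hT, Finset.card_eq_zero.mp h'])
      · obtain ⟨x, hx⟩ := Finset.card_eq_one.mp h'
        exact hS (by simp [hT, hx])
    · exact h
  have hnotmem : (∅ : Finset (Fin m)) ∉ Finset.univ.image
      (fun j : Fin m => ({j} : Finset (Fin m))) := by simp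
  rw [key, hsum, hT, Finset.sum_insert hnotmem,
    Finset.sum_image (by intro x _ y _ h; simpa using h), hempty]
  simp_rw [hsingle]
  rw [← Finset.mul_sum]
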